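/- Let b : ℝ → ℝ be continuous with b > 0 on (α, β), let F(x) = ∫_{x₀}^x dr/b(r) be a C¹ strictly increasing bijection from (α, β) onto ℝ, and set X(t, x) = F⁻¹(F(x) + t). Then X ∈ C¹(ℝ × (α, β)), ∂_t X(t,x) = b(X(t,x)), and X(0, x) = x. -/
import Mathlib


open Set

theorem flow_of_b
    (b : ℝ → ℝ) (hb : Continuous b) (α β : ℝ) (hαβ : α < β)
    (hpos : ∀ x ∈ Ioo α β, 0 < b x)
    (x₀ : ℝ) (hx₀ : x₀ ∈ Ioo α β)
    (F : ℝ → ℝ) (hF : ∀ x ∈ Ioo α β, F x = ∫ r in x₀..x, 1 / b r)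
    (hFC1 : ContDiffOn ℝ 1 F (Ioo α β)) (hFmono : StrictMonoOn F (Ioo α β))
    (G : ℝ → ℝ) (hGF : ∀ x ∈ Ioo α β, G (F x) = x)
    (hFG : ∀ y : ℝ, G y ∈ Ioo α β ∧ F (G y) = y)
    (X : ℝ → ℝ → ℝ) (hX : ∀ t x, X t x = G (F x + t)) :
    ContDiffOn ℝ 1 (fun p : ℝ × ℝ => X p.1 p.2) (univ ×ˢ Ioo α β) ∧
    (∀ x ∈ Ioo α β, ∀ t : ℝ, HasDerivAt (fun s => X s x) (b (X t x)) t) ∧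
    (∀ x ∈ Ioo α β, X 0 x = x) := by
  -- F has derivative 1 / b x at every x ∈ Ioo α β
  have hbne : ∀ x ∈ Ioo α β, b x ≠ 0 := fun x hx => (hpos x hx).ne'
  have hF' : ∀ x ∈ Ioo α β, HasDerivAt F (1 / b x) x := by
    intro x hx
    have hsub : uIcc x₀ x ⊆ Ioo α β := by
      exact ordConnected_Ioo.uIcc_subset hx₀ hx
    have hcontOn : ContinuousOn (fun r => 1 / b r) (Ioo α β) := by
      apply ContinuousOn.div continuousOn_const hb.continuousOn
      exact fun r hr => hbne r hr
    have hint : IntervalIntegrable (fun r => 1 / b r) MeasureTheory.volume x₀ x :=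
      (hcontOn.mono hsub).intervalIntegrable
    have hca : ContinuousAt (fun r => 1 / b r) x :=
      (hcontOn x hx).continuousAt (isOpen_Ioo.mem_nhds hx)
    have hmeas : StronglyMeasurableAtFilter (fun r => 1 / b r) (nhds x) MeasureTheory.volume :=
      hcontOn.stronglyMeasurableAtFilter isOpen_Ioo x hx
    have hI : HasDerivAt (fun u => ∫ r in x₀..u, 1 / b r) (1 / b x) x :=
      intervalIntegral.integral_hasDerivAt_right hint hmeas hca
    apply hI.congr_of_eventuallyEq
    filter_upwards [isOpen_Ioo.mem_nhds hx] with u hu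
    exact hF u hu
  -- G is strictly monotone
  have hGmono : StrictMono G := by
    intro y₁ y₂ h
    rcases lt_trichotomy (G y₁) (G y₂) with h' | h' | h'
    · exact h'
    · exfalso; have := congrArg F h'
      rw [(hFG y₁).2, (hFG y₂).2] at this; exact absurd this h.ne
    · exfalso
      have := hFmono (hFG y₂).1 (hFG y₁).1 h'
      rw [(hFG y₁).2, (hFG y₂).2] at this; exact absurd h (not_lt.2 this.le)
  -- G is continuous
  have hrange : Ioo α β ⊆ range G := fun x hx => ⟨F x, hGF x hx⟩
  have hGcont : Continuous G := by
    rw [continuous_iff_continuousAt]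
    intro y
    have : G '' univ ∈ nhds (G y) := by
      rw [image_univ]
      exact Filter.mem_of_superset (isOpen_Ioo.mem_nhds (hFG y).1) hrange
    exact (hGmono.strictMonoOn univ).continuousAt_of_image_mem_nhds (Filter.univ_mem) this
  -- G has derivative b (G y) at every y
  have hG' : ∀ y : ℝ, HasDerivAt G (b (G y)) y := by
    intro y
    have hF'' : HasDerivAt F (1 / b (G y)) (G y) := hF' _ (hFG y).1
    have hne : (1 / b (G y)) ≠ 0 := one_div_ne_zero (hbne _ (hFG y).1)
    have := hF''.of_local_left_inverse hGcont.continuousAt hne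
      (Filter.Eventually.of_forall fun z => (hFG z).2)
    simpa [one_div, inv_inv] using this
  refine ⟨?_, ?_, ?_⟩
  · -- smoothness
    have hGC1 : ContDiff ℝ 1 G := by
      rw [contDiff_one_iff_deriv]
      refine ⟨fun y => (hG' y).differentiableAt, ?_⟩
      have : deriv G = fun y => b (G y) := funext fun y => (hG' y).deriv
      rw [this]
      exact hb.comp hGcont
    have h1 : ContDiffOn ℝ 1 (fun p : ℝ × ℝ => F p.2 + p.1) (univ ×ˢ Ioo α β) := by
      apply ContDiffOn.add
      · exact hFC1.comp contDiff_snd.contDiffOn (fun p hp => hp.2)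
      · exact contDiff_fst.contDiffOn
    have := hGC1.comp_contDiffOn h1
    apply this.congr
    intro p _
    exact hX p.1 p.2
  · -- derivative in t
    intro x hx t
    have h1 : HasDerivAt (fun s : ℝ => F x + s) 1 t := (hasDerivAt_id t).const_add (F x)
    have h2 : HasDerivAt (fun s : ℝ => G (F x + s)) (b (G (F x + t)) * 1) t :=
      (hG' (F x + t)).comp t h1
    rw [mul_one] at h2
    have heq : (fun s => X s x) = fun s : ℝ => G (F x + s) := funext fun s => hX s x
    rw [heq, hX t x]
    exact h2
  · intro x hx
    rw [hX 0 x, add_zero, hGF x hx]
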